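/- In the periodic 1D setting, the squared bias of the Local Mixup minimizer, Bias²(f_K) = (1/n)·Σ_{i ∈ ℤ/nℤ} (f_K(i) − y_i)², converges as K → ∞ to (1/n)·Σ_{i ∈ ℤ/nℤ} (y_i − E[y])². -/

import Mathlib

/-- The training mean `E[y] = (1/n)·Σ_{i ∈ ℤ/nℤ} y_i`. -/
noncomputable def trainMean (n : ℕ) [NeZero n] (y : ZMod n → ℝ) : ℝ :=
  (1 / (n : ℝ)) * ∑ i, y i

/-- `A_K(i) = (1/K)·Σ_{k=1}^{K−1} ((K−k)·y_{i−k} + k·y_{i+K−k})` (so `A_1(i) = 0`). -/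
noncomputable def mixA (n : ℕ) (y : ZMod n → ℝ) (i : ZMod n) (K : ℕ) : ℝ :=
  (1 / (K : ℝ)) * ∑ k ∈ Finset.Icc 1 (K - 1),
    (((K : ℝ) - (k : ℝ)) * y (i - (k : ZMod n)) + (k : ℝ) * y (i + ((K - k : ℕ) : ZMod n)))

/-- `S_1(i) = 0` and `S_{K+1}(i) = S_K(i) + A_{K+1}(i)`. -/
noncomputable def mixS (n : ℕ) (y : ZMod n → ℝ) (i : ZMod n) : ℕ → ℝ
  | 0 => 0
  | K + 1 => mixS n y i K + mixA n y i (K + 1)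

/-- The Local Mixup minimizer `f_K(i) = (2/(K·(K+3)))·(2K·y_i + S_K(i))`. -/
noncomputable def mixF (n : ℕ) (y : ZMod n → ℝ) (K : ℕ) (i : ZMod n) : ℝ :=
  (2 / ((K : ℝ) * ((K : ℝ) + 3))) * (2 * (K : ℝ) * y i + mixS n y i K)

section auxLemmas

open Finset

lemma zmod_sum_range' (n : ℕ) [NeZero n] (G : ZMod n → ℝ) :
    ∑ k ∈ Finset.range n, G ((k : ZMod n)) = ∑ x : ZMod n, G x := by
  refine Finset.sum_nbij' (i := fun k => (k : ZMod n)) (j := fun x => x.val)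
    (fun a _ => Finset.mem_univ _)
    (fun x _ => Finset.mem_range.mpr (ZMod.val_lt x))
    (fun a ha => ZMod.val_natCast_of_lt (Finset.mem_range.mp ha))
    (fun x _ => by simp [ZMod.natCast_val, ZMod.cast_id])
    (fun a _ => rfl)

lemma zmod_sum_shift' (n : ℕ) [NeZero n] (G : ZMod n → ℝ) (c : ZMod n) :
    ∑ x : ZMod n, G (c + x) = ∑ x : ZMod n, G x :=
  Fintype.sum_equiv (Equiv.addLeft c) _ _ (fun _ => rfl)

lemma zmod_sum_window' (n : ℕ) [NeZero n] (G : ZMod n → ℝ) (a : ℕ) :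
    ∑ k ∈ Finset.Ico a (a + n), G ((k : ZMod n)) = ∑ x : ZMod n, G x := by
  rw [Finset.sum_Ico_eq_sum_range]
  simp only [Nat.add_sub_cancel_left]
  have : ∀ k : ℕ, G (((a + k : ℕ) : ZMod n)) = (fun x => G ((a : ZMod n) + x)) ((k : ZMod n)) := by
    intro k; push_cast; rfl
  rw [Finset.sum_congr rfl (fun k _ => this k)]
  exact (zmod_sum_range' n (fun x => G ((a : ZMod n) + x))).trans (zmod_sum_shift' n G _)

/-- Partial sums of a mean-zero periodic sequence are bounded. -/
lemma partial_sum_bound' (n : ℕ) [NeZero n] (G : ZMod n → ℝ)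
    (hzero : ∑ x : ZMod n, G x = 0) (j : ℕ) :
    |∑ k ∈ Finset.Icc 1 j, G ((k : ZMod n))| ≤ n * ∑ x : ZMod n, |G x| := by
  set C0 := ∑ x : ZMod n, |G x| with hC0
  have hC0nn : 0 ≤ C0 := Finset.sum_nonneg (fun x _ => abs_nonneg _)
  induction j using Nat.strong_induction_on with
  | _ j ih =>
    rcases lt_or_ge j n with hj | hj
    · calc |∑ k ∈ Finset.Icc 1 j, G ((k : ZMod n))| ≤ ∑ k ∈ Finset.Icc 1 j, |G ((k : ZMod n))| :=
            Finset.abs_sum_le_sum_abs _ _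
        _ ≤ ∑ k ∈ Finset.Icc 1 j, C0 := Finset.sum_le_sum (fun k _ =>
            Finset.single_le_sum (f := fun x => |G x|) (fun x _ => abs_nonneg _) (Finset.mem_univ _))
        _ = (j : ℝ) * C0 := by rw [Finset.sum_const, Nat.card_Icc]; simp [nsmul_eq_mul]
        _ ≤ (n : ℝ) * C0 := by
            apply mul_le_mul_of_nonneg_right _ hC0nn
            exact_mod_cast hj.le
    · have hsplit : ∑ k ∈ Finset.Ioc 0 (j - n), G ((k : ZMod n))
          + ∑ k ∈ Finset.Ioc (j - n) j, G ((k : ZMod n))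
          = ∑ k ∈ Finset.Ioc 0 j, G ((k : ZMod n)) :=
        Finset.sum_Ioc_consecutive _ (Nat.zero_le _) (Nat.sub_le _ _)
      have hwin : ∑ k ∈ Finset.Ioc (j - n) j, G ((k : ZMod n)) = 0 := by
        have heq : Finset.Ioc (j - n) j = Finset.Ico (j - n + 1) ((j - n + 1) + n) := by
          rw [← Finset.Ico_add_one_add_one_eq_Ioc]
          congr 1
          omega
        rw [heq, zmod_sum_window', hzero]
      have h1 : ∀ m : ℕ, Finset.Icc 1 m = Finset.Ioc 0 m := fun m => rfl
      have hn : 0 < n := Nat.pos_of_ne_zero (NeZero.ne n)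
      rw [h1, ← hsplit, hwin, add_zero, ← h1]
      exact ih (j - n) (by omega)

lemma abel_id' (h : ℕ → ℝ) : ∀ m : ℕ,
    ∑ k ∈ Finset.Icc 1 m, (((m : ℝ) + 1) - k) * h k
      = ∑ j ∈ Finset.Icc 1 m, ∑ k ∈ Finset.Icc 1 j, h k := by
  intro m
  induction m with
  | zero => simp
  | succ m ih =>
    rw [Finset.sum_Icc_succ_top (Nat.one_le_iff_ne_zero.mpr (Nat.succ_ne_zero m)),
        Finset.sum_Icc_succ_top (Nat.one_le_iff_ne_zero.mpr (Nat.succ_ne_zero m))]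
    have expand : ∑ k ∈ Finset.Icc 1 m, (((m : ℝ) + 1 + 1) - k) * h k
        = ∑ k ∈ Finset.Icc 1 m, ((((m : ℝ) + 1) - k) * h k + h k) := by
      apply Finset.sum_congr rfl; intro k _; ring
    push_cast
    rw [expand, Finset.sum_add_distrib, ih]
    have h2 : ((m : ℝ) + 1 + 1 - (m + 1)) * h (m + 1) = h (m + 1) := by ring
    rw [h2]
    have h3 : ∑ k ∈ Finset.Icc 1 (m + 1), h k = ∑ k ∈ Finset.Icc 1 m, h k + h (m + 1) :=
      Finset.sum_Icc_succ_top (Nat.one_le_iff_ne_zero.mpr (Nat.succ_ne_zero m)) _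
    rw [h3]
    ring

lemma gauss_Icc (m : ℕ) : ∑ j ∈ Finset.Icc 1 m, (j : ℝ) = (m : ℝ) * ((m : ℝ) + 1) / 2 := by
  induction m with
  | zero => simp
  | succ m ih =>
    rw [Finset.sum_Icc_succ_top (Nat.one_le_iff_ne_zero.mpr (Nat.succ_ne_zero m)), ih]
    push_cast
    ring

lemma mixA_mul (n : ℕ) (y : ZMod n → ℝ) (i : ZMod n) (K : ℕ) (hK : 1 ≤ K) :
    (K : ℝ) * mixA n y i K
      = ∑ k ∈ Finset.Icc 1 (K - 1),
          ((K : ℝ) - (k : ℝ)) * (y (i - (k : ZMod n)) + y (i + (k : ZMod n))) := by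
  have hK0 : (K : ℝ) ≠ 0 := Nat.cast_ne_zero.mpr (by omega)
  rw [mixA, ← mul_assoc, mul_one_div, div_self hK0, one_mul, Finset.sum_add_distrib]
  have hre : ∑ k ∈ Finset.Icc 1 (K - 1), (k : ℝ) * y (i + ((K - k : ℕ) : ZMod n))
      = ∑ k ∈ Finset.Icc 1 (K - 1), ((K : ℝ) - (k : ℝ)) * y (i + (k : ZMod n)) := by
    refine Finset.sum_nbij' (i := fun k => K - k) (j := fun k => K - k) ?_ ?_ ?_ ?_ ?_
    · intro a ha; simp only [Finset.mem_Icc] at *; omega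
    · intro a ha; simp only [Finset.mem_Icc] at *; omega
    · intro a ha; simp only [Finset.mem_Icc] at ha; omega
    · intro a ha; simp only [Finset.mem_Icc] at ha; omega
    · intro a ha
      simp only [Finset.mem_Icc] at ha
      have h2 : ((K - a : ℕ) : ℝ) = (K : ℝ) - (a : ℝ) := by
        have : a ≤ K := by omega
        push_cast [this]; ring
      rw [h2]; ring
  rw [hre, ← Finset.sum_add_distrib]
  apply Finset.sum_congr rfl; intro k _; ring

lemma mixS_eq_sum (n : ℕ) (y : ZMod n → ℝ) (i : ZMod n) (K : ℕ) :
    mixS n y i K = ∑ m ∈ Finset.range K, mixA n y i (m + 1) := by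
  induction K with
  | zero => rfl
  | succ K ih => rw [Finset.sum_range_succ, ← ih]; rfl

end auxLemmas

section mainBounds

open Finset

variable (n : ℕ) [NeZero n] (y : ZMod n → ℝ) (i : ZMod n)

/-- The centered, symmetrized sequence. -/
noncomputable def mixG : ZMod n → ℝ := fun x => y (i - x) + y (i + x) - 2 * trainMean n y

lemma mixG_zero : ∑ x : ZMod n, mixG n y i x = 0 := by
  have hn : (n : ℝ) ≠ 0 := Nat.cast_ne_zero.mpr (NeZero.ne n)
  have h1 : ∑ x : ZMod n, y (i - x) = ∑ x : ZMod n, y x :=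
    Fintype.sum_equiv (Equiv.subLeft i) _ _ (fun _ => rfl)
  have h2 : ∑ x : ZMod n, y (i + x) = ∑ x : ZMod n, y x :=
    Fintype.sum_equiv (Equiv.addLeft i) _ _ (fun _ => rfl)
  have hcard : (Fintype.card (ZMod n) : ℝ) = (n : ℝ) := by rw [ZMod.card]
  simp only [mixG, Finset.sum_sub_distrib, Finset.sum_add_distrib, h1, h2,
    Finset.sum_const, Finset.card_univ, nsmul_eq_mul, trainMean]
  rw [hcard]
  field_simp
  ring

/-- The key uniform bound `|A_K − (K−1)·E| ≤ C`. -/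
lemma mixA_bound (K : ℕ) (hK : 1 ≤ K) :
    |mixA n y i K - ((K : ℝ) - 1) * trainMean n y|
      ≤ (n : ℝ) * ∑ x : ZMod n, |mixG n y i x| := by
  set E := trainMean n y with hE
  set C := (n : ℝ) * ∑ x : ZMod n, |mixG n y i x| with hC
  have hK0 : (0 : ℝ) < (K : ℝ) := by exact_mod_cast (by omega : 0 < K)
  have hKm : ((K - 1 : ℕ) : ℝ) = (K : ℝ) - 1 := by
    have : 1 ≤ K := hK
    push_cast [this]; ring
  have key : (K : ℝ) * (mixA n y i K - ((K : ℝ) - 1) * E)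
      = ∑ j ∈ Finset.Icc 1 (K - 1), ∑ k ∈ Finset.Icc 1 j, mixG n y i ((k : ZMod n)) := by
    rw [mul_sub, mixA_mul n y i K hK]
    have hsplit : ∀ k ∈ Finset.Icc 1 (K - 1),
        ((K : ℝ) - (k : ℝ)) * (y (i - (k : ZMod n)) + y (i + (k : ZMod n)))
          = ((K : ℝ) - (k : ℝ)) * mixG n y i ((k : ZMod n)) + ((K : ℝ) - (k : ℝ)) * (2 * E) := by
      intro k _; simp only [mixG]; ring
    rw [Finset.sum_congr rfl hsplit, Finset.sum_add_distrib]
    have hgauss : ∑ k ∈ Finset.Icc 1 (K - 1), ((K : ℝ) - (k : ℝ)) * (2 * E)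
        = (K : ℝ) * (((K : ℝ) - 1) * E) := by
      have : ∑ k ∈ Finset.Icc 1 (K - 1), ((K : ℝ) - (k : ℝ)) * (2 * E)
          = ((K - 1 : ℕ) : ℝ) * (K : ℝ) * (2 * E) - (∑ k ∈ Finset.Icc 1 (K - 1), (k : ℝ)) * (2 * E) := by
        rw [← Finset.sum_mul, Finset.sum_sub_distrib, Finset.sum_const, Nat.card_Icc]
        simp [nsmul_eq_mul]
        ring
      rw [this, gauss_Icc, hKm]
      ring
    have habel : ∑ k ∈ Finset.Icc 1 (K - 1), ((K : ℝ) - (k : ℝ)) * mixG n y i ((k : ZMod n))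
        = ∑ j ∈ Finset.Icc 1 (K - 1), ∑ k ∈ Finset.Icc 1 j, mixG n y i ((k : ZMod n)) := by
      have := abel_id' (fun k => mixG n y i ((k : ZMod n))) (K - 1)
      rw [← this]
      apply Finset.sum_congr rfl
      intro k _
      rw [hKm]
      ring_nf
    rw [hgauss, habel]
    ring
  have hmain : |(K : ℝ) * (mixA n y i K - ((K : ℝ) - 1) * E)| ≤ (K : ℝ) * C := by
    rw [key]
    calc |∑ j ∈ Finset.Icc 1 (K - 1), ∑ k ∈ Finset.Icc 1 j, mixG n y i ((k : ZMod n))|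
        ≤ ∑ j ∈ Finset.Icc 1 (K - 1), |∑ k ∈ Finset.Icc 1 j, mixG n y i ((k : ZMod n))| :=
          Finset.abs_sum_le_sum_abs _ _
      _ ≤ ∑ j ∈ Finset.Icc 1 (K - 1), C :=
          Finset.sum_le_sum (fun j _ => partial_sum_bound' n _ (mixG_zero n y i) j)
      _ = ((K - 1 : ℕ) : ℝ) * C := by rw [Finset.sum_const, Nat.card_Icc]; simp [nsmul_eq_mul]
      _ ≤ (K : ℝ) * C := by
          have hCnn : 0 ≤ C := by
            rw [hC]
            exact mul_nonneg (Nat.cast_nonneg n) (Finset.sum_nonneg (fun x _ => abs_nonneg _))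
          apply mul_le_mul_of_nonneg_right _ hCnn
          exact_mod_cast Nat.sub_le K 1
  rw [abs_mul, abs_of_pos hK0] at hmain
  exact le_of_mul_le_mul_left hmain hK0

lemma mixS_bound (K : ℕ) :
    |mixS n y i K - trainMean n y * ((K : ℝ) * ((K : ℝ) - 1) / 2)|
      ≤ (K : ℝ) * ((n : ℝ) * ∑ x : ZMod n, |mixG n y i x|) := by
  set E := trainMean n y with hE
  set C := (n : ℝ) * ∑ x : ZMod n, |mixG n y i x| with hC
  have hsum : ∑ m ∈ Finset.range K, (m : ℝ) = (K : ℝ) * ((K : ℝ) - 1) / 2 := by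
    induction K with
    | zero => simp
    | succ K ih => rw [Finset.sum_range_succ, ih]; push_cast; ring
  have hS : mixS n y i K - E * ((K : ℝ) * ((K : ℝ) - 1) / 2)
      = ∑ m ∈ Finset.range K, (mixA n y i (m + 1) - (m : ℝ) * E) := by
    rw [mixS_eq_sum, Finset.sum_sub_distrib, ← Finset.sum_mul, hsum]
    ring
  rw [hS]
  calc |∑ m ∈ Finset.range K, (mixA n y i (m + 1) - (m : ℝ) * E)|
      ≤ ∑ m ∈ Finset.range K, |mixA n y i (m + 1) - (m : ℝ) * E| :=
        Finset.abs_sum_le_sum_abs _ _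
    _ ≤ ∑ m ∈ Finset.range K, C := by
        apply Finset.sum_le_sum
        intro m _
        have := mixA_bound n y i (m + 1) (by omega)
        have hcast : ((m + 1 : ℕ) : ℝ) - 1 = (m : ℝ) := by push_cast; ring
        rwa [hcast] at this
    _ = (K : ℝ) * C := by rw [Finset.sum_const, Finset.card_range]; simp [nsmul_eq_mul]

open Filter in
lemma mixF_tendsto : Tendsto (fun K : ℕ => mixF n y K i) atTop (nhds (trainMean n y)) := by
  set E := trainMean n y with hE
  set C := (n : ℝ) * ∑ x : ZMod n, |mixG n y i x| with hC
  have hCnn : 0 ≤ C :=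
    mul_nonneg (Nat.cast_nonneg n) (Finset.sum_nonneg (fun x _ => abs_nonneg _))
  rw [← tendsto_sub_nhds_zero_iff]
  apply squeeze_zero_norm' (a := fun K : ℕ => (4 * |y i - E| + 2 * C) / ((K : ℝ) + 3))
  · filter_upwards [eventually_ge_atTop 1] with K hK
    have hKpos : (0 : ℝ) < (K : ℝ) := by exact_mod_cast (by omega : 0 < K)
    have hK3 : (0 : ℝ) < (K : ℝ) + 3 := by linarith
    set r := mixS n y i K - E * ((K : ℝ) * ((K : ℝ) - 1) / 2) with hr
    have hrb : |r| ≤ (K : ℝ) * C := mixS_bound n y i K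
    have hid : mixF n y K i - E
        = (4 * (y i - E)) / ((K : ℝ) + 3) + 2 * r / ((K : ℝ) * ((K : ℝ) + 3)) := by
      rw [mixF]
      have hSval : mixS n y i K = E * ((K : ℝ) * ((K : ℝ) - 1) / 2) + r := by rw [hr]; ring
      rw [hSval]
      field_simp
      ring
    rw [Real.norm_eq_abs, hid]
    calc |4 * (y i - E) / ((K : ℝ) + 3) + 2 * r / ((K : ℝ) * ((K : ℝ) + 3))|
        ≤ |4 * (y i - E) / ((K : ℝ) + 3)| + |2 * r / ((K : ℝ) * ((K : ℝ) + 3))| := abs_add_le _ _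
      _ ≤ 4 * |y i - E| / ((K : ℝ) + 3) + 2 * C / ((K : ℝ) + 3) := by
          apply add_le_add
          · rw [abs_div, abs_of_pos hK3, abs_mul]
            norm_num
          · rw [abs_div, abs_of_pos (mul_pos hKpos hK3), abs_mul, abs_two]
            have heq : 2 * ((K : ℝ) * C) / ((K : ℝ) * ((K : ℝ) + 3)) = 2 * C / ((K : ℝ) + 3) := by
              field_simp
            rw [← heq]
            gcongr
      _ = (4 * |y i - E| + 2 * C) / ((K : ℝ) + 3) := by ring
  · apply Tendsto.div_atTop tendsto_const_nhds
    exact tendsto_atTop_add_const_right _ _ tendsto_natCast_atTop_atTop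

end mainBounds

open Filter in
/-- In the periodic 1D setting, the squared bias
`Bias²(f_K) = (1/n)·Σ_i (f_K(i) − y_i)²` converges, as `K → ∞`, to
`(1/n)·Σ_i (y_i − E[y])²`. -/
theorem localMixup_bias_limit (n : ℕ) [NeZero n] (y : ZMod n → ℝ) :
    Tendsto (fun K : ℕ => (1 / (n : ℝ)) * ∑ i, (mixF n y K i - y i) ^ 2) atTop
      (nhds ((1 / (n : ℝ)) * ∑ i, (y i - trainMean n y) ^ 2)) := by
  apply Tendsto.const_mul
  have hsq : ∀ i : ZMod n, (y i - trainMean n y) ^ 2 = (trainMean n y - y i) ^ 2 := by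
    intro i; ring
  simp only [hsq]
  apply tendsto_finset_sum
  intro i _
  exact ((mixF_tendsto n y i).sub_const (y i)).pow 2
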